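/- For unitary operators U, V on a finite-dimensional Hilbert space, there exists a real number x such that D(U,V) = (1/2)‖U - e^{ix}V‖, where ‖·‖ is the operator norm. -/

import Mathlib

set_option maxHeartbeats 1000000

open scoped InnerProductSpace RealInnerProductSpace ComplexConjugate
open Module

variable {H : Type*} [NormedAddCommGroup H] [InnerProductSpace ℂ H] [FiniteDimensional ℂ H]

noncomputable def Dpsi (U V : H →L[ℂ] H) (ψ : H) : ℝ :=
  Real.sqrt (1 - ‖⟪ψ, (star U * V) ψ⟫_ℂ‖ ^ 2)

noncomputable def uDist (U V : H →L[ℂ] H) : ℝ :=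
  sSup {d : ℝ | ∃ ψ : H, ‖ψ‖ = 1 ∧ d = Dpsi U V ψ}

lemma support_min {K : Set ℂ} (hK : Convex ℝ K) {c₀ c : ℂ} (hc₀ : c₀ ∈ K) (hc : c ∈ K)
    (hmin : ∀ z ∈ K, ‖c₀‖ ≤ ‖z‖) : ‖c₀‖ ^ 2 ≤ (conj c₀ * c).re := by
  by_contra hlt
  push_neg at hlt
  rw [mul_comm (conj c₀) c, ← Complex.inner] at hlt
  set w : ℂ := c - c₀ with hw
  set ε : ℝ := ‖c₀‖ ^ 2 - ⟪c₀, c⟫_ℝ with hε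
  have hεpos : 0 < ε := by simp only [hε]; linarith
  set t : ℝ := min 1 (ε / (‖w‖ ^ 2 + 1)) with ht
  have htpos : 0 < t := lt_min one_pos (div_pos hεpos (by positivity))
  have ht1 : t ≤ 1 := min_le_left _ _
  have ht2 : t ≤ ε / (‖w‖ ^ 2 + 1) := min_le_right _ _
  have hmem : (1 - t) • c₀ + t • c ∈ K := hK hc₀ hc (by linarith) htpos.le (by ring)
  have hzeq : (1 - t) • c₀ + t • c = c₀ + t • w := by rw [hw]; module
  have hnorm := hmin _ hmem
  rw [hzeq] at hnorm
  have hexp : ‖c₀ + t • w‖ ^ 2 = ‖c₀‖ ^ 2 + 2 * (t * ⟪c₀, w⟫_ℝ) + t ^ 2 * ‖w‖ ^ 2 := by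
    rw [@norm_add_sq_real ℂ, real_inner_smul_right, norm_smul]
    simp [mul_pow, Real.norm_eq_abs, sq_abs]
  have hinnerw : ⟪c₀, w⟫_ℝ = -ε := by
    rw [hw, inner_sub_right, hε, ← @real_inner_self_eq_norm_sq ℂ]
    ring
  have hsq : ‖c₀‖ ^ 2 ≤ ‖c₀ + t • w‖ ^ 2 := by
    apply pow_le_pow_left₀ (norm_nonneg _) hnorm
  rw [hexp, hinnerw] at hsq
  have hX : (0:ℝ) < ‖w‖ ^ 2 + 1 := by positivity
  rw [le_div_iff₀ hX] at ht2
  nlinarith [norm_nonneg w, mul_le_mul_of_nonneg_left ht2 htpos.le]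

lemma opNorm_le_unit {T : H →L[ℂ] H} {M : ℝ} (hM : 0 ≤ M)
    (h : ∀ ψ : H, ‖ψ‖ = 1 → ‖T ψ‖ ≤ M) : ‖T‖ ≤ M := by
  refine T.opNorm_le_bound hM fun x => ?_
  rcases eq_or_ne x 0 with rfl | hx
  · simp
  · have hxn : ‖x‖ ≠ 0 := norm_ne_zero_iff.mpr hx
    have h1 : ‖((‖x‖ : ℂ)⁻¹) • x‖ = 1 := by
      rw [norm_smul]
      simp [norm_inv, hxn]
    have h2 := h _ h1
    rw [map_smul, norm_smul] at h2
    simp only [norm_inv, Complex.norm_real, Real.norm_eq_abs, abs_norm] at h2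
    rw [inv_mul_le_iff₀ (lt_of_le_of_ne (norm_nonneg x) (Ne.symm hxn))] at h2
    linarith [h2]

lemma unitary_norm_apply' {W : H →L[ℂ] H} (hW : W ∈ unitary (H →L[ℂ] H)) (ψ : H) :
    ‖W ψ‖ = ‖ψ‖ := by
  have h1 : star W * W = 1 := hW.1
  have h : ⟪W ψ, W ψ⟫_ℂ = ⟪ψ, ψ⟫_ℂ := by
    rw [← ContinuousLinearMap.adjoint_inner_right, ← ContinuousLinearMap.star_eq_adjoint,
      ← ContinuousLinearMap.comp_apply, ← ContinuousLinearMap.mul_def, h1,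
      ContinuousLinearMap.one_apply]
  rw [inner_self_eq_norm_sq_to_K (𝕜 := ℂ), inner_self_eq_norm_sq_to_K (𝕜 := ℂ)] at h
  have h' : ‖W ψ‖ ^ 2 = ‖ψ‖ ^ 2 := by exact_mod_cast h
  nlinarith [norm_nonneg (W ψ), norm_nonneg ψ]

lemma exists_unitary_eigenbasis (W : H →L[ℂ] H) (hW : W ∈ unitary (H →L[ℂ] H)) :
    ∃ (b : OrthonormalBasis (Fin (finrank ℂ H)) ℂ H) (lam : Fin (finrank ℂ H) → ℂ),
      (∀ j, W (b j) = lam j • b j) ∧ (∀ j, ‖lam j‖ = 1) := by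
  classical
  have h1 : star W * W = 1 := hW.1
  have h2 : W * star W = 1 := hW.2
  set A : H →L[ℂ] H := W + star W with hA_def
  set B : H →L[ℂ] H := Complex.I • (star W - W) with hB_def
  have hAsa : IsSelfAdjoint A := by
    simp only [IsSelfAdjoint, hA_def, star_add, star_star]; abel
  have hBsa : IsSelfAdjoint B := by
    simp only [IsSelfAdjoint, hB_def, star_smul, star_sub, star_star, Complex.star_def,
      Complex.conj_I, neg_smul, smul_sub]
    abel
  have hAB : A * B = B * A := by
    simp only [hA_def, hB_def, mul_smul_comm, smul_mul_assoc, add_mul, mul_add, sub_mul, mul_sub,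
      h1, h2]
    module
  have hA : LinearMap.IsSymmetric (A : H →ₗ[ℂ] H) :=
    ContinuousLinearMap.isSelfAdjoint_iff_isSymmetric.mp hAsa
  have hB : LinearMap.IsSymmetric (B : H →ₗ[ℂ] H) :=
    ContinuousLinearMap.isSelfAdjoint_iff_isSymmetric.mp hBsa
  have hABl : Commute (A : H →ₗ[ℂ] H) (B : H →ₗ[ℂ] H) :=
    LinearMap.ext fun x => congrArg (fun T : H →L[ℂ] H => T x) hAB
  set V : ℂ × ℂ → Submodule ℂ H :=
    fun i => End.eigenspace (A : H →ₗ[ℂ] H) i.2 ⊓ End.eigenspace (B : H →ₗ[ℂ] H) i.1 with hV_def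
  have hint : DirectSum.IsInternal V :=
    LinearMap.IsSymmetric.directSum_isInternal_of_commute hA hB hABl
  have hfam := LinearMap.IsSymmetric.orthogonalFamily_eigenspace_inf_eigenspace hA hB
  have : Fintype {i : ℂ × ℂ // V i ≠ ⊥} :=
    hint.submodule_iSupIndep.fintypeNeBotOfFiniteDimensional
  have hind' : iSupIndep (fun i : {i : ℂ × ℂ // V i ≠ ⊥} => V i.1) :=
    hint.submodule_iSupIndep.comp Subtype.val_injective
  have hsup : iSup V = ⊤ := hint.submodule_iSup_eq_top
  have hsup' : ⨆ i : {i : ℂ × ℂ // V i ≠ ⊥}, V i.1 = ⊤ := by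
    rw [eq_top_iff, ← hsup]
    refine iSup_le fun i => ?_
    by_cases hi : V i = ⊥
    · rw [hi]; exact bot_le
    · exact le_iSup (fun j : {i : ℂ × ℂ // V i ≠ ⊥} => V j.1) ⟨i, hi⟩
  have hint' : DirectSum.IsInternal (fun i : {i : ℂ × ℂ // V i ≠ ⊥} => V i.1) :=
    DirectSum.isInternal_submodule_of_iSupIndep_of_iSup_eq_top hind' hsup'
  have hfam' : OrthogonalFamily ℂ (fun i : {i : ℂ × ℂ // V i ≠ ⊥} => V i.1)
      (fun i => (V i.1).subtypeₗᵢ) := hfam.comp Subtype.val_injective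
  set b := hint'.subordinateOrthonormalBasis rfl hfam' with hb_def
  set idx := fun j => (hint'.subordinateOrthonormalBasisIndex rfl j hfam' : {i : ℂ × ℂ // V i ≠ ⊥})
    with hidx_def
  have hlam : ∀ j, W (b j) = ((2:ℂ)⁻¹ * ((idx j).1.2 + Complex.I * (idx j).1.1)) • b j := by
    intro j
    have hmem := hint'.subordinateOrthonormalBasis_subordinate rfl j hfam'
    obtain ⟨hmA, hmB⟩ := Submodule.mem_inf.mp hmem
    rw [Module.End.mem_eigenspace_iff] at hmA hmB
    have hAb : A (b j) = (idx j).1.2 • b j := hmA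
    have hBb : B (b j) = (idx j).1.1 • b j := hmB
    have h2W : A + Complex.I • B = (2:ℂ) • W := by
      simp only [hA_def, hB_def, smul_smul, Complex.I_mul_I, smul_sub, neg_smul, one_smul]
      module
    have happ := congrArg (fun T : H →L[ℂ] H => T (b j)) h2W
    simp only [ContinuousLinearMap.add_apply, ContinuousLinearMap.smul_apply, hAb, hBb] at happ
    have h2 : (2:ℂ) • W (b j) = ((idx j).1.2 + Complex.I * (idx j).1.1) • b j := by
      rw [← happ]; rw [smul_smul, add_smul]
    calc W (b j) = (2:ℂ)⁻¹ • ((2:ℂ) • W (b j)) := by rw [smul_smul]; norm_num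
    _ = ((2:ℂ)⁻¹ * ((idx j).1.2 + Complex.I * (idx j).1.1)) • b j := by rw [h2, smul_smul]
  refine ⟨b, _, hlam, fun j => ?_⟩
  have h := unitary_norm_apply' hW (b j)
  rw [hlam j, norm_smul] at h
  have hb1 : ‖b j‖ = 1 := b.orthonormal.1 j
  rw [hb1] at h
  simpa using h

lemma cval_formula {W : H →L[ℂ] H} (hW : W ∈ unitary (H →L[ℂ] H))
    {m : ℕ} (b : OrthonormalBasis (Fin m) ℂ H) (lam : Fin m → ℂ)
    (hlam : ∀ j, W (b j) = lam j • b j) (hlam1 : ∀ j, ‖lam j‖ = 1) (ψ : H) :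
    ⟪ψ, W ψ⟫_ℂ = ∑ j, (‖b.repr ψ j‖ ^ 2 : ℝ) • lam j := by
  have h1 : star W * W = 1 := hW.1
  have hconj : ∀ j, conj (lam j) * lam j = 1 := by
    intro j
    rw [← Complex.normSq_eq_conj_mul_self]
    rw [Complex.normSq_eq_norm_sq, hlam1 j]
    norm_num
  have hstar : ∀ j, (star W) (b j) = conj (lam j) • b j := by
    intro j
    have h' : (star W) (W (b j)) = b j := by
      rw [← ContinuousLinearMap.comp_apply, ← ContinuousLinearMap.mul_def, h1,
        ContinuousLinearMap.one_apply]
    rw [hlam j, map_smul] at h'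
    have h2 := congrArg (fun v : H => conj (lam j) • v) h'
    simpa [smul_smul, hconj j] using h2
  have hrepr : ∀ j, b.repr (W ψ) j = lam j * b.repr ψ j := by
    intro j
    rw [b.repr_apply_apply, b.repr_apply_apply, ← ContinuousLinearMap.adjoint_inner_left,
      ← ContinuousLinearMap.star_eq_adjoint, hstar j, inner_smul_left, Complex.conj_conj]
  rw [← b.repr.inner_map_map ψ (W ψ), PiLp.inner_apply]
  refine Finset.sum_congr rfl fun j _ => ?_
  rw [hrepr j, RCLike.inner_apply, Complex.real_smul]
  rw [show ((‖b.repr ψ j‖ ^ 2 : ℝ) : ℂ) = conj (b.repr ψ j) * b.repr ψ j by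
    rw [← Complex.normSq_eq_conj_mul_self, Complex.normSq_eq_norm_sq]]
  ring

lemma norm_repr_sum {m : ℕ} (b : OrthonormalBasis (Fin m) ℂ H) (ψ : H) :
    ∑ j, ‖b.repr ψ j‖ ^ 2 = ‖ψ‖ ^ 2 := by
  have h := b.repr.norm_map ψ
  rw [EuclideanSpace.norm_eq] at h
  have h2 : (0:ℝ) ≤ ∑ j, ‖b.repr ψ j‖ ^ 2 := Finset.sum_nonneg fun j _ => sq_nonneg _
  rw [← h, Real.sq_sqrt h2]

theorem stmt_18 (U V : H →L[ℂ] H) (hU : U ∈ unitary (H →L[ℂ] H))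
    (hV : V ∈ unitary (H →L[ℂ] H)) :
    ∃ x : ℝ, uDist U V = (1 / 2) * ‖U - Complex.exp ((x : ℂ) * Complex.I) • V‖ := by
  classical
  rcases subsingleton_or_nontrivial H with hsub | hnt
  · refine ⟨0, ?_⟩
    have hset : {d : ℝ | ∃ ψ : H, ‖ψ‖ = 1 ∧ d = Dpsi U V ψ} = ∅ := by
      ext d
      simp only [Set.mem_setOf_eq, Set.mem_empty_iff_false, iff_false, not_exists]
      rintro ψ ⟨hψ, -⟩
      rw [Subsingleton.elim ψ 0, norm_zero] at hψ
      exact one_ne_zero hψ.symm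
    have hUV : U - Complex.exp (((0:ℝ):ℂ) * Complex.I) • V = 0 := by
      ext ψ; exact Subsingleton.elim _ _
    rw [uDist, hset, Real.sSup_empty, hUV, norm_zero, mul_zero]
  · set W : H →L[ℂ] H := star U * V with hWdef
    have hW : W ∈ unitary (H →L[ℂ] H) := mul_mem (Unitary.star_mem hU) hV
    obtain ⟨b, lam, hlam, hlam1⟩ := exists_unitary_eigenbasis W hW
    have hn : 0 < finrank ℂ H := finrank_pos
    set i0 : Fin (finrank ℂ H) := ⟨0, hn⟩ with hi0
    set cval : H → ℂ := fun ψ => ⟪ψ, W ψ⟫_ℂ with hcval_def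
    have hDpsi : ∀ ψ : H, Dpsi U V ψ = Real.sqrt (1 - ‖cval ψ‖ ^ 2) := fun ψ => rfl
    have hcval : ∀ ψ, cval ψ = ∑ j, (‖b.repr ψ j‖ ^ 2 : ℝ) • lam j :=
      cval_formula hW b lam hlam hlam1
    have hcnorm : ∀ ψ : H, ‖ψ‖ = 1 → ‖cval ψ‖ ≤ 1 := by
      intro ψ hψ
      calc ‖cval ψ‖ ≤ ‖ψ‖ * ‖W ψ‖ := norm_inner_le_norm _ _
      _ = 1 := by rw [unitary_norm_apply' hW, hψ]; norm_num
    set K : Set ℂ := (fun t : Fin (finrank ℂ H) → ℝ => ∑ j, t j • lam j) '' stdSimplex ℝ (Fin (finrank ℂ H)) with hK_def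
    have hKconv : Convex ℝ K := by
      rintro x ⟨s, hs, rfl⟩ y ⟨t, ht, rfl⟩ a c ha hc hac
      refine ⟨fun j => a * s j + c * t j, (convex_stdSimplex ℝ _) hs ht ha hc hac, ?_⟩
      simp only [add_smul, mul_smul, Finset.sum_add_distrib, Finset.smul_sum]
    have hKcomp : IsCompact K := by
      apply (isCompact_stdSimplex ℝ _).image
      exact continuous_finset_sum _ fun j _ => (continuous_apply j).smul continuous_const
    have hlamK : ∀ i : Fin (finrank ℂ H), lam i ∈ K := by
      intro i
      refine ⟨fun j => if j = i then 1 else 0, ⟨fun j => by positivity, by simp⟩, by simp⟩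
    have hKne : K.Nonempty := ⟨lam i0, hlamK i0⟩
    have hmemK : ∀ ψ : H, ‖ψ‖ = 1 → cval ψ ∈ K := by
      intro ψ hψ
      exact ⟨fun j => ‖b.repr ψ j‖ ^ 2, ⟨fun j => sq_nonneg _,
        by rw [norm_repr_sum b ψ, hψ]; norm_num⟩, (hcval ψ).symm⟩
    have hreal : ∀ t ∈ stdSimplex ℝ (Fin (finrank ℂ H)), ∃ ψ : H, ‖ψ‖ = 1 ∧ cval ψ = ∑ j, t j • lam j := by
      intro t ht
      set v : EuclideanSpace ℂ (Fin (finrank ℂ H)) :=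
        (WithLp.equiv 2 (Fin (finrank ℂ H) → ℂ)).symm (fun j => (Real.sqrt (t j) : ℂ)) with hv
      have hvj : ∀ j, v j = (Real.sqrt (t j) : ℂ) := fun j => rfl
      have hvnormsq : ∀ j, ‖v j‖ ^ 2 = t j := by
        intro j
        rw [hvj j, Complex.norm_real, Real.norm_eq_abs, sq_abs, Real.sq_sqrt (ht.1 j)]
      refine ⟨b.repr.symm v, ?_, ?_⟩
      · rw [LinearIsometryEquiv.norm_map, EuclideanSpace.norm_eq]
        simp only [hvnormsq]
        rw [ht.2, Real.sqrt_one]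
      · rw [hcval, b.repr.apply_symm_apply]
        exact Finset.sum_congr rfl fun j _ => by rw [hvnormsq j]
    obtain ⟨c₀, hc₀K, hc₀min⟩ := hKcomp.exists_isMinOn hKne continuous_norm.continuousOn
    have hmin' : ∀ z ∈ K, ‖c₀‖ ≤ ‖z‖ := fun z hz => hc₀min hz
    set d : ℝ := ‖c₀‖ with hd_def
    have hd0 : 0 ≤ d := norm_nonneg _
    have hd1 : d ≤ 1 := by
      have := hmin' _ (hlamK i0)
      rw [hlam1 i0] at this
      exact this
    have h1d2 : (0:ℝ) ≤ 1 - d ^ 2 := by nlinarith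
    -- uDist bounds
    have hDle1 : ∀ ψ : H, ‖ψ‖ = 1 → Dpsi U V ψ ≤ 1 := by
      intro ψ hψ
      rw [hDpsi]
      calc Real.sqrt (1 - ‖cval ψ‖ ^ 2) ≤ Real.sqrt 1 :=
        Real.sqrt_le_sqrt (by nlinarith [sq_nonneg ‖cval ψ‖])
      _ = 1 := Real.sqrt_one
    have hbdd : BddAbove {d : ℝ | ∃ ψ : H, ‖ψ‖ = 1 ∧ d = Dpsi U V ψ} := by
      refine ⟨1, ?_⟩
      rintro y ⟨ψ, hψ, rfl⟩
      exact hDle1 ψ hψ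
    have huDle1 : uDist U V ≤ 1 := by
      rw [uDist]
      apply Real.sSup_le _ zero_le_one
      rintro y ⟨ψ, hψ, rfl⟩
      exact hDle1 ψ hψ
    have huDge : Real.sqrt (1 - d ^ 2) ≤ uDist U V := by
      obtain ⟨t, ht, htq⟩ := hc₀K
      obtain ⟨ψ₀, hψ₀, hcψ₀⟩ := hreal t ht
      have htq' : ∑ j, t j • lam j = c₀ := htq
      have heq : Dpsi U V ψ₀ = Real.sqrt (1 - d ^ 2) := by
        rw [hDpsi, hcψ₀, htq']
      rw [uDist]
      exact le_csSup hbdd ⟨ψ₀, hψ₀, heq.symm⟩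
    -- norm squared identity
    have hnormsq : ∀ (μ : ℂ), ‖μ‖ = 1 → ∀ ψ : H, ‖ψ‖ = 1 →
        ‖(U - μ • V) ψ‖ ^ 2 = 2 - 2 * (μ * cval ψ).re := by
      intro μ hμ ψ hψ
      have hUVin : ⟪U ψ, V ψ⟫_ℂ = cval ψ := by
        rw [hcval_def]
        simp only [hWdef, ContinuousLinearMap.mul_apply, ContinuousLinearMap.star_eq_adjoint,
          ContinuousLinearMap.adjoint_inner_right]
      rw [ContinuousLinearMap.sub_apply, ContinuousLinearMap.smul_apply, @norm_sub_sq ℂ,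
        inner_smul_right, hUVin, unitary_norm_apply' hU, hψ, norm_smul,
        unitary_norm_apply' hV, hψ, hμ]
      simp [RCLike.mul_re]
      ring
    -- the phase μ₂ with g x₂ ≥ 1
    have hconjlam : conj (lam i0) * lam i0 = 1 := by
      rw [← Complex.normSq_eq_conj_mul_self, Complex.normSq_eq_norm_sq, hlam1 i0]
      norm_num
    set μ₂ : ℂ := -(conj (lam i0)) with hμ₂
    have hμ₂1 : ‖μ₂‖ = 1 := by rw [hμ₂, norm_neg, RCLike.norm_conj, hlam1 i0]
    have hVb : V (b i0) = lam i0 • U (b i0) := by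
      have hUW : U (W (b i0)) = V (b i0) := by
        have : U * W = V := by rw [hWdef, ← mul_assoc, hU.2, one_mul]
        rw [← this]; rfl
      rw [← hUW, hlam i0, map_smul]
    have hTb : (U - μ₂ • V) (b i0) = (2:ℂ) • U (b i0) := by
      rw [ContinuousLinearMap.sub_apply, ContinuousLinearMap.smul_apply, hVb, smul_smul]
      have h2 : (1:ℂ) - μ₂ * lam i0 = 2 := by
        rw [hμ₂, neg_mul, sub_neg_eq_add, hconjlam]
        norm_num
      calc U (b i0) - (μ₂ * lam i0) • U (b i0)
          = ((1:ℂ) - μ₂ * lam i0) • U (b i0) := by rw [sub_smul, one_smul]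
      _ = (2:ℂ) • U (b i0) := by rw [h2]
    have hTnorm : (2:ℝ) ≤ ‖U - μ₂ • V‖ := by
      have hb1 : ‖b i0‖ = 1 := b.orthonormal.1 i0
      have h1 : ‖(U - μ₂ • V) (b i0)‖ = 2 := by
        rw [hTb, norm_smul, unitary_norm_apply' hU, hb1]
        norm_num
      have h2 := (U - μ₂ • V).le_opNorm (b i0)
      rw [h1, hb1, mul_one] at h2
      exact h2
    -- the phase μ₁ with g x₁ ≤ uDist
    set μ₁ : ℂ := if c₀ = 0 then 1 else ((d:ℝ) : ℂ)⁻¹ * conj c₀ with hμ₁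
    have hμ₁1 : ‖μ₁‖ = 1 := by
      rw [hμ₁]
      split_ifs with hc
      · simp
      · have hdne : d ≠ 0 := by simpa [hd_def] using hc
        rw [norm_mul, norm_inv, RCLike.norm_conj, Complex.norm_real, Real.norm_eq_abs,
          abs_of_nonneg hd0, ← hd_def, inv_mul_cancel₀ hdne]
    have hkey : ∀ ψ : H, ‖ψ‖ = 1 → 2 * d ^ 2 - 1 ≤ (μ₁ * cval ψ).re := by
      intro ψ hψ
      have hcK := hmemK ψ hψ
      have hc1 := hcnorm ψ hψ
      rw [hμ₁]
      split_ifs with hc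
      · have hd_eq : d = 0 := by rw [hd_def, hc, norm_zero]
        have habs := Complex.abs_re_le_norm (cval ψ)
        have : -(1:ℝ) ≤ (cval ψ).re := by
          cases abs_le.mp habs with
          | intro h _ => linarith
        rw [one_mul, hd_eq]
        linarith
      · have hdpos : 0 < d := by rw [hd_def]; exact norm_pos_iff.mpr hc
        have hsupp := support_min hKconv hc₀K hcK hmin'
        have hre : ((((d:ℝ):ℂ))⁻¹ * conj c₀ * cval ψ).re = d⁻¹ * (conj c₀ * cval ψ).re := by
          rw [mul_assoc, ← Complex.ofReal_inv, Complex.re_ofReal_mul]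
        rw [hre]
        have h3 : d ≤ d⁻¹ * (conj c₀ * cval ψ).re := by
          rw [← hd_def] at hsupp
          calc d = d⁻¹ * d ^ 2 := by field_simp
          _ ≤ d⁻¹ * (conj c₀ * cval ψ).re :=
            mul_le_mul_of_nonneg_left hsupp (inv_nonneg.mpr hd0)
        nlinarith
    have hx₁norm : ‖U - μ₁ • V‖ ≤ 2 * Real.sqrt (1 - d ^ 2) := by
      apply opNorm_le_unit (by positivity)
      intro ψ hψ
      have h1 := hnormsq μ₁ hμ₁1 ψ hψ
      have h2 := hkey ψ hψ
      have h3 : ‖(U - μ₁ • V) ψ‖ ^ 2 ≤ 4 * (1 - d ^ 2) := by rw [h1]; linarith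
      have h4 : (2 * Real.sqrt (1 - d ^ 2)) ^ 2 = 4 * (1 - d ^ 2) := by
        rw [mul_pow, Real.sq_sqrt h1d2]; ring
      calc ‖(U - μ₁ • V) ψ‖ = Real.sqrt (‖(U - μ₁ • V) ψ‖ ^ 2) :=
        (Real.sqrt_sq (norm_nonneg _)).symm
      _ ≤ Real.sqrt (4 * (1 - d ^ 2)) := Real.sqrt_le_sqrt h3
      _ = 2 * Real.sqrt (1 - d ^ 2) := by rw [← h4, Real.sqrt_sq (by positivity)]
    -- IVT
    set g : ℝ → ℝ := fun x => (1 / 2) * ‖U - Complex.exp ((x:ℂ) * Complex.I) • V‖ with hg_def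
    have hgcont : Continuous g := by
      apply Continuous.mul continuous_const
      apply Continuous.norm
      apply Continuous.sub continuous_const
      exact (Complex.continuous_exp.comp (Complex.continuous_ofReal.mul continuous_const)).smul
        continuous_const
    have hexparg : ∀ μ : ℂ, ‖μ‖ = 1 → Complex.exp ((μ.arg : ℂ) * Complex.I) = μ := by
      intro μ hμ
      have h := Complex.norm_mul_exp_arg_mul_I μ
      rw [hμ] at h
      simpa using h
    have hg1 : g μ₁.arg ≤ uDist U V := by
      have : g μ₁.arg = (1/2) * ‖U - μ₁ • V‖ := by rw [hg_def]; simp [hexparg μ₁ hμ₁1]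
      rw [this]
      calc (1/2) * ‖U - μ₁ • V‖ ≤ (1/2) * (2 * Real.sqrt (1 - d ^ 2)) := by linarith [hx₁norm]
      _ = Real.sqrt (1 - d ^ 2) := by ring
      _ ≤ uDist U V := huDge
    have hg2 : uDist U V ≤ g μ₂.arg := by
      have heq : g μ₂.arg = (1/2) * ‖U - μ₂ • V‖ := by rw [hg_def]; simp [hexparg μ₂ hμ₂1]
      rw [heq]
      calc uDist U V ≤ 1 := huDle1
      _ ≤ (1/2) * ‖U - μ₂ • V‖ := by linarith [hTnorm]
    have hmemIcc : uDist U V ∈ Set.uIcc (g μ₁.arg) (g μ₂.arg) :=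
      Set.mem_uIcc.mpr (Or.inl ⟨hg1, hg2⟩)
    obtain ⟨x, -, hx⟩ := intermediate_value_uIcc hgcont.continuousOn hmemIcc
    exact ⟨x, hx.symm⟩
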